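/- Type C linkage at the origin, ℓ odd: let ℓ > 3 be odd, λ+ρ strictly decreasing positive integers, and suppose both μ = λ − ε_i and ν = λ + ε_i are dominant. Then μ and ν are linked under W_ℓ if and only if (λ+ρ)_i ≡ 0 (mod ℓ). -/

import Mathlib

/-- The standard basis vector `ε_i` of `ℚ^N`. -/
def eps {N : ℕ} (i : Fin N) : Fin N → ℚ := fun t => if t = i then 1 else 0

/-- The affine reflection `s_{α,k}` with root `α`, coroot `αv` and constant `c = k ℓ_α`:
`x ↦ x − ((x, αv) − c) α`, i.e. `s_α(x) + c·α`. -/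
def affRef {N : ℕ} (α αv : Fin N → ℚ) (c : ℚ) (x : Fin N → ℚ) : Fin N → ℚ :=
  fun t => x t - ((∑ s, x s * αv s) - c) * α t

/-- The affine reflections generating `W_ℓ` in type `C_N`: the roots are
`ε_i ± ε_j` (`i < j`, coroot equal to the root, `ℓ_α = ℓ`) and the long roots `2ε_i`
(coroot `ε_i`, `ℓ_α = ℓ / gcd(ℓ,2)`). -/
def IsCRef (N ℓ : ℕ) (f : (Fin N → ℚ) → (Fin N → ℚ)) : Prop :=
  (∃ i j : Fin N, ∃ k : ℤ, i < j ∧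
    (f = affRef (eps i - eps j) (eps i - eps j) ((k : ℚ) * ℓ) ∨
     f = affRef (eps i + eps j) (eps i + eps j) ((k : ℚ) * ℓ))) ∨
  (∃ i : Fin N, ∃ k : ℤ,
    f = affRef ((2 : ℚ) • eps i) (eps i) ((k : ℚ) * ((ℓ : ℚ) / (Nat.gcd ℓ 2))))

/-- Two (ρ-shifted) weights are linked in type `C_N` if they lie in the same orbit of
the group generated by the affine reflections of `W_ℓ`. -/
def CLinked (N ℓ : ℕ) (x y : Fin N → ℚ) : Prop :=
  Relation.EqvGen (fun u v => ∃ f, IsCRef N ℓ f ∧ v = f u) x y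

/-- Dominant weights of type `C_N`: weakly decreasing non-negative integer tuples. -/
def DominantC (N : ℕ) (lam : Fin N → ℤ) : Prop :=
  (∀ s t : Fin N, s ≤ t → lam t ≤ lam s) ∧ ∀ t, 0 ≤ lam t

/-- `λ − ε_i`. -/
def subE {N : ℕ} (lam : Fin N → ℤ) (i : Fin N) : Fin N → ℤ :=
  fun t => lam t - if t = i then 1 else 0

/-- `λ + ε_i`. -/
def addE {N : ℕ} (lam : Fin N → ℤ) (i : Fin N) : Fin N → ℤ :=
  fun t => lam t + if t = i then 1 else 0

/-- The ρ-shift in type `C_N`: `(λ+ρ)_j = λ_j + (N+1−j)` (0-indexed: `λ_j + (N−j)`). -/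
def shiftC (N : ℕ) (lam : Fin N → ℤ) : Fin N → ℚ :=
  fun t => (lam t : ℚ) + ((N : ℚ) - ((t : ℕ) : ℚ))

/-- x ~ y modulo ℓ up to sign. -/
def modRel (ℓ : ℕ) (x y : ℚ) : Prop := ∃ k : ℤ, y = x + k * ℓ ∨ y = -x + k * ℓ

def modSetoid (ℓ : ℕ) : Setoid ℚ where
  r := modRel ℓ
  iseqv := by
    constructor
    · intro x; exact ⟨0, Or.inl (by push_cast; ring)⟩
    · rintro x y ⟨k, h | h⟩
      · exact ⟨-k, Or.inl (by subst h; push_cast; ring)⟩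
      · exact ⟨k, Or.inr (by subst h; push_cast; ring)⟩
    · rintro x y z ⟨k, h | h⟩ ⟨m, g | g⟩
      · exact ⟨k + m, Or.inl (by subst h g; push_cast; ring)⟩
      · exact ⟨m - k, Or.inr (by subst h g; push_cast; ring)⟩
      · exact ⟨k + m, Or.inr (by subst h g; push_cast; ring)⟩
      · exact ⟨m - k, Or.inl (by subst h g; push_cast; ring)⟩

def cinv (N ℓ : ℕ) (x : Fin N → ℚ) : Multiset (Quotient (modSetoid ℓ)) :=
  Finset.univ.val.map fun t => (Quotient.mk (modSetoid ℓ) (x t))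

lemma map_univ_swap {N : ℕ} {β : Type*} (i j : Fin N) (f g : Fin N → β)
    (h1 : f i = g j) (h2 : f j = g i) (h : ∀ t, t ≠ i → t ≠ j → f t = g t) :
    Finset.univ.val.map f = Finset.univ.val.map g := by
  have hfg : f = g ∘ (Equiv.swap i j) := by
    funext t
    by_cases hti : t = i
    · subst hti; simp [Equiv.swap_apply_left, h1]
    by_cases htj : t = j
    · subst htj; simp [Equiv.swap_apply_right, h2]
    · simp [Equiv.swap_apply_of_ne_of_ne hti htj, h t hti htj]
  have huniv : Finset.univ.val.map (Equiv.swap i j) = Finset.univ.val := by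
    have := congrArg Finset.val (Finset.map_univ_equiv (Equiv.swap i j))
    simpa [Finset.map] using this
  calc Finset.univ.val.map f = Finset.univ.val.map (g ∘ (Equiv.swap i j)) := by rw [hfg]
    _ = (Finset.univ.val.map (Equiv.swap i j)).map g := (Multiset.map_map _ _ _).symm
    _ = Finset.univ.val.map g := by rw [huniv]

lemma sum_eps {N : ℕ} (x : Fin N → ℚ) (i : Fin N) : ∑ s, x s * eps i s = x i := by
  simp [eps, mul_ite, mul_one, mul_zero]

lemma sum_eps_sub {N : ℕ} (x : Fin N → ℚ) (i j : Fin N) :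
    ∑ s, x s * (eps i - eps j) s = x i - x j := by
  have : ∀ s, x s * (eps i - eps j) s = x s * eps i s - x s * eps j s := by
    intro s; simp [Pi.sub_apply]; ring
  rw [Finset.sum_congr rfl (fun s _ => this s), Finset.sum_sub_distrib, sum_eps, sum_eps]

lemma sum_eps_add {N : ℕ} (x : Fin N → ℚ) (i j : Fin N) :
    ∑ s, x s * (eps i + eps j) s = x i + x j := by
  have : ∀ s, x s * (eps i + eps j) s = x s * eps i s + x s * eps j s := by
    intro s; simp [Pi.add_apply]; ring
  rw [Finset.sum_congr rfl (fun s _ => this s), Finset.sum_add_distrib, sum_eps, sum_eps]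

lemma cinv_ref {N ℓ : ℕ} (hodd : Odd ℓ) {f : (Fin N → ℚ) → (Fin N → ℚ)}
    (hf : IsCRef N ℓ f) (x : Fin N → ℚ) : cinv N ℓ (f x) = cinv N ℓ x := by
  obtain ⟨i, j, k, hij, hf | hf⟩ | ⟨i, k, hf⟩ := hf
  · -- ε_i − ε_j
    subst hf
    have hne : i ≠ j := ne_of_lt hij
    have hi : affRef (eps i - eps j) (eps i - eps j) ((k : ℚ) * ℓ) x i = x j + k * ℓ := by
      unfold affRef; rw [sum_eps_sub]; simp [eps, Pi.sub_apply, hne]; ring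
    have hj : affRef (eps i - eps j) (eps i - eps j) ((k : ℚ) * ℓ) x j = x i - k * ℓ := by
      unfold affRef; rw [sum_eps_sub]; simp [eps, Pi.sub_apply, hne.symm]; ring
    refine map_univ_swap i j _ _ ?_ ?_ ?_
    · exact Quotient.sound ⟨-k, Or.inl (by rw [hi]; push_cast; ring)⟩
    · exact Quotient.sound ⟨k, Or.inl (by rw [hj]; push_cast; ring)⟩
    · intro t hti htj
      have : affRef (eps i - eps j) (eps i - eps j) ((k : ℚ) * ℓ) x t = x t := by
        unfold affRef; simp [eps, Pi.sub_apply, hti, htj]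
      rw [this]
  · -- ε_i + ε_j
    subst hf
    have hne : i ≠ j := ne_of_lt hij
    have hi : affRef (eps i + eps j) (eps i + eps j) ((k : ℚ) * ℓ) x i = -(x j) + k * ℓ := by
      unfold affRef; rw [sum_eps_add]; simp [eps, Pi.add_apply, hne]; ring
    have hj : affRef (eps i + eps j) (eps i + eps j) ((k : ℚ) * ℓ) x j = -(x i) + k * ℓ := by
      unfold affRef; rw [sum_eps_add]; simp [eps, Pi.add_apply, hne.symm]; ring
    refine map_univ_swap i j _ _ ?_ ?_ ?_
    · exact Quotient.sound ⟨k, Or.inr (by rw [hi]; push_cast; ring)⟩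
    · exact Quotient.sound ⟨k, Or.inr (by rw [hj]; push_cast; ring)⟩
    · intro t hti htj
      have : affRef (eps i + eps j) (eps i + eps j) ((k : ℚ) * ℓ) x t = x t := by
        unfold affRef; simp [eps, Pi.add_apply, hti, htj]
      rw [this]
  · -- long root 2ε_i
    subst hf
    have hg : (Nat.gcd ℓ 2 : ℚ) = 1 := by
      have : Nat.gcd ℓ 2 = 1 := Nat.coprime_two_right.mpr hodd
      rw [this]; norm_num
    have hc : (k : ℚ) * ((ℓ : ℚ) / (Nat.gcd ℓ 2)) = k * ℓ := by rw [hg]; ring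
    apply Multiset.map_congr rfl
    intro t _
    by_cases hti : t = i
    · have hi : affRef ((2 : ℚ) • eps i) (eps i) ((k : ℚ) * ((ℓ : ℚ) / (Nat.gcd ℓ 2))) x i
          = -(x i) + (2 * k) * ℓ := by
        unfold affRef; rw [sum_eps, hc]; simp [eps, Pi.smul_apply]; ring
      rw [hti]
      exact Quotient.sound ⟨2 * k, Or.inr (by rw [hi]; push_cast; ring)⟩
    · have : affRef ((2 : ℚ) • eps i) (eps i) ((k : ℚ) * ((ℓ : ℚ) / (Nat.gcd ℓ 2))) x t
          = x t := by
        unfold affRef; simp [eps, Pi.smul_apply, hti]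
      rw [this]

lemma cinv_linked {N ℓ : ℕ} (hodd : Odd ℓ) {x y : Fin N → ℚ} (h : CLinked N ℓ x y) :
    cinv N ℓ x = cinv N ℓ y := by
  induction h with
  | rel u v h => obtain ⟨f, hf, rfl⟩ := h; exact (cinv_ref hodd hf u).symm
  | refl => rfl
  | symm _ _ _ ih => exact ih.symm
  | trans _ _ _ _ _ ih1 ih2 => exact ih1.trans ih2

/-- Type `C` linkage at the origin, `ℓ` odd: if `ℓ > 3` is odd and `λ`, `μ = λ − ε_i`,
`ν = λ + ε_i` are dominant, then `μ` and `ν` are linked under `W_ℓ` if and only if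
`(λ+ρ)_i ≡ 0 (mod ℓ)`. -/
theorem linked_e_f_same_typeC_odd (N ℓ : ℕ) (hodd : Odd ℓ) (hl : 3 < ℓ)
    (lam : Fin N → ℤ) (hlam : DominantC N lam) (i : Fin N)
    (hmu : DominantC N (subE lam i)) (hnu : DominantC N (addE lam i)) :
    CLinked N ℓ (shiftC N (subE lam i)) (shiftC N (addE lam i)) ↔
      (ℓ : ℤ) ∣ (lam i + ((N : ℤ) - (i : ℕ))) := by
  classical
  set a : ℤ := lam i + ((N : ℤ) - (i : ℕ)) with ha
  set x := shiftC N (subE lam i) with hx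
  set y := shiftC N (addE lam i) with hy
  have hxi : x i = (a : ℚ) - 1 := by
    simp [hx, shiftC, subE, ha]; push_cast; ring
  have hyi : y i = (a : ℚ) + 1 := by
    simp [hy, shiftC, addE, ha]; push_cast; ring
  have hxyt : ∀ t, t ≠ i → x t = y t := by
    intro t ht; simp [hx, hy, shiftC, subE, addE, ht]
  constructor
  · intro hlink
    have hinv := cinv_linked hodd hlink
    -- decompose the multisets at position i
    have huniv : (Finset.univ : Finset (Fin N)).val
        = i ::ₘ ((Finset.univ : Finset (Fin N)).erase i).val := by
      conv_lhs => rw [← Finset.insert_erase (Finset.mem_univ i)]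
      rw [Finset.insert_val_of_notMem (Finset.notMem_erase i _)]
    have htail : (((Finset.univ : Finset (Fin N)).erase i).val).map
          (fun t => (Quotient.mk (modSetoid ℓ) (x t)))
        = (((Finset.univ : Finset (Fin N)).erase i).val).map
          (fun t => (Quotient.mk (modSetoid ℓ) (y t))) := by
      apply Multiset.map_congr rfl
      intro t ht
      have hti : t ≠ i := (Finset.mem_erase.mp (Finset.mem_val.mp ht)).1
      rw [hxyt t hti]
    have hcons : (Quotient.mk (modSetoid ℓ) (x i)) ::ₘ
          ((((Finset.univ : Finset (Fin N)).erase i).val).map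
            (fun t => (Quotient.mk (modSetoid ℓ) (y t))))
        = (Quotient.mk (modSetoid ℓ) (y i)) ::ₘ
          ((((Finset.univ : Finset (Fin N)).erase i).val).map
            (fun t => (Quotient.mk (modSetoid ℓ) (y t)))) := by
      have := hinv
      unfold cinv at this
      rw [huniv, Multiset.map_cons, Multiset.map_cons, htail] at this
      exact this
    have hq : (Quotient.mk (modSetoid ℓ) (x i)) = (Quotient.mk (modSetoid ℓ) (y i)) := by
      by_contra hne
      have hcount := congrArg (Multiset.count (Quotient.mk (modSetoid ℓ) (x i))) hcons
      rw [Multiset.count_cons_self, Multiset.count_cons_of_ne hne] at hcount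
      omega
    obtain ⟨k, hk | hk⟩ := Quotient.exact hq
    · rw [hxi, hyi] at hk
      have : (2 : ℤ) = k * ℓ := by
        have : (2 : ℚ) = (k : ℚ) * ℓ := by linarith
        exact_mod_cast this
      have h2 : (ℓ : ℤ) ∣ 2 := ⟨k, by linarith⟩
      have := Int.le_of_dvd (by norm_num) h2
      omega
    · rw [hxi, hyi] at hk
      have h2a : 2 * a = k * ℓ := by
        have : (2 : ℚ) * a = (k : ℚ) * ℓ := by push_cast at hk ⊢; linarith
        exact_mod_cast this
      have hdvd : (ℓ : ℤ) ∣ 2 * a := ⟨k, by linarith⟩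
      have hcop : IsCoprime (ℓ : ℤ) 2 := by
        rw [Int.isCoprime_iff_gcd_eq_one]
        have h1 : Nat.gcd ℓ 2 = 1 := Nat.coprime_two_right.mpr hodd
        simpa [Int.gcd] using h1
      exact hcop.dvd_of_dvd_mul_left hdvd
  · rintro ⟨k, hk⟩
    apply Relation.EqvGen.rel
    refine ⟨affRef ((2 : ℚ) • eps i) (eps i) ((k : ℚ) * ((ℓ : ℚ) / (Nat.gcd ℓ 2))),
      Or.inr ⟨i, k, rfl⟩, ?_⟩
    have hg : (Nat.gcd ℓ 2 : ℚ) = 1 := by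
      have : Nat.gcd ℓ 2 = 1 := Nat.coprime_two_right.mpr hodd
      rw [this]; norm_num
    have hka : (k : ℚ) * ℓ = (a : ℚ) := by
      have : (a : ℚ) = ((ℓ : ℤ) * k : ℤ) := by exact_mod_cast congrArg (Int.cast : ℤ → ℚ) hk
      push_cast at this; linarith
    funext t
    by_cases hti : t = i
    · subst hti
      unfold affRef
      rw [sum_eps]
      simp only [Pi.smul_apply, eps, if_pos rfl, smul_eq_mul, mul_one]
      rw [hg, hxi, hyi]
      push_cast
      ring_nf
      rw [hka]  -- may need adjustment
      ring
    · have : affRef ((2 : ℚ) • eps i) (eps i) ((k : ℚ) * ((ℓ : ℚ) / (Nat.gcd ℓ 2))) x t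
          = x t := by
        unfold affRef; simp [eps, Pi.smul_apply, hti]
      rw [this, hxyt t hti]
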